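/- Let x_1 < … < x_n be reals, m_1,…,m_n > 0, E_{jk} = exp(−|x_j − x_k|), and P = diag(m_1,…,m_n). Then det(PEP) = (∏_{j=1}^{n−1} (1 − E_{j,j+1}²)) · ∏_{j=1}^{n} m_j², and in particular det(PEP) > 0. -/

import Mathlib

open Matrix

/-- The matrix `E j k = exp (-|x j - x k|)`. -/
noncomputable def Ematrix (n : ℕ) (x : Fin n → ℝ) : Matrix (Fin n) (Fin n) ℝ :=
  fun j k => Real.exp (-|x j - x k|)

/-- `det (PEP) = ∏_{j=1}^{n-1} (1 - E_{j,j+1}²) ∏_{j=1}^n m_j² > 0` for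
`x_1 < … < x_n` and all `m_j > 0`. -/
lemma detE : ∀ (n : ℕ) (x : Fin n → ℝ), StrictMono x →
    (Ematrix n x).det = ∏ j : Fin (n-1),
      (1 - (Ematrix n x ⟨(j : ℕ), by have := j.isLt; omega⟩ ⟨(j : ℕ) + 1, by have := j.isLt; omega⟩)^2)
  | 0, x, hx => by simp [Matrix.det_fin_zero]
  | 1, x, hx => by simp [Ematrix, Matrix.det_fin_one]
  | (k+2), x, hx => by
    set lst : Fin (k+2) := Fin.last (k+1) with hlst
    set p : Fin (k+2) := ⟨k, by omega⟩ with hp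
    have hplt : x p < x lst := hx (by simp [hp, hlst, Fin.lt_def])
    set c : ℝ := Real.exp (x p - x lst) with hc
    set E := Ematrix (k+2) x with hE
    have hne : lst ≠ p := by simp [hlst, hp, Fin.ext_iff]
    have hrow : ∀ j : Fin (k+2), j ≠ lst → E lst j = c * E p j := by
      intro j hj
      have hjk : (j : ℕ) ≤ k := by
        have := j.isLt; have : (j : ℕ) ≠ k+1 := fun h => hj (Fin.ext h); omega
      have h1 : x j ≤ x p := hx.monotone (by simp [hp, Fin.le_def]; omega)
      have h2 : x j ≤ x lst := le_of_lt (lt_of_le_of_lt h1 hplt)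
      simp only [hE, Ematrix, hc]
      rw [← Real.exp_add]
      congr 1
      rw [abs_of_nonneg (by linarith), abs_of_nonneg (by linarith)]
      ring
    have hEll : E lst lst = 1 := by simp [hE, Ematrix]
    have hEpl : E p lst = c := by
      simp only [hE, Ematrix, hc]
      congr 1
      rw [abs_of_nonpos (by linarith)]
      ring
    set B := E.updateRow lst (E lst + (-c) • E p) with hB
    have hdetB : B.det = E.det := Matrix.det_updateRow_add_smul_self E hne (-c)
    have hBrow : ∀ j : Fin (k+2), B lst j = if j = lst then 1 - c^2 else 0 := by
      intro j
      by_cases hj : j = lst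
      · subst hj
        simp [hB, Matrix.updateRow_self, hEll, hEpl]
        ring
      · simp only [hB, Matrix.updateRow_self, Pi.add_apply, Pi.smul_apply, smul_eq_mul,
          hrow j hj, if_neg hj]
        ring
    have hsub : B.submatrix Fin.castSucc Fin.castSucc
        = Ematrix (k+1) (x ∘ Fin.castSucc) := by
      ext i j
      have hi : (Fin.castSucc i) ≠ lst := by
        simp [hlst, Fin.ext_iff]; omega
      simp [hB, Matrix.submatrix_apply, Matrix.updateRow_ne hi, hE, Ematrix]
    have hdetsub : (B.submatrix Fin.castSucc Fin.castSucc).det =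
        ∏ j : Fin k, (1 - (Ematrix (k+1) (x ∘ Fin.castSucc)
          ⟨(j : ℕ), by omega⟩ ⟨(j : ℕ) + 1, by omega⟩)^2) := by
      rw [hsub]
      exact detE (k+1) (x ∘ Fin.castSucc) (hx.comp Fin.strictMono_castSucc)
    have hexpand : B.det = (1 - c^2) * (B.submatrix Fin.castSucc Fin.castSucc).det := by
      rw [Matrix.det_succ_row B lst]
      rw [Finset.sum_eq_single lst]
      · rw [hBrow lst, if_pos rfl]
        have : (Fin.last (k+1)).succAbove = Fin.castSucc := Fin.succAbove_last
        rw [hlst] at *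
        simp only [this]
        have hpow : ((-1 : ℝ)) ^ ((Fin.last (k+1) : ℕ) + (Fin.last (k+1) : ℕ)) = 1 := by
          rw [← two_mul, pow_mul]; norm_num
        rw [hpow]; ring
      · intro j _ hj
        rw [hBrow j, if_neg hj]; ring
      · intro h; simp at h
    have key : E.det = (1 - c^2) * ∏ j : Fin k,
        (1 - (Ematrix (k+1) (x ∘ Fin.castSucc) ⟨(j : ℕ), by omega⟩ ⟨(j : ℕ) + 1, by omega⟩)^2) := by
      rw [← hdetB, hexpand, hdetsub]
    rw [hE] at key
    rw [key]
    have hred : (k + 2 - 1) = k + 1 := rfl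
    rw [show (∏ j : Fin (k+2-1), (1 - (Ematrix (k+2) x ⟨(j : ℕ), by omega⟩
        ⟨(j : ℕ) + 1, by omega⟩)^2)) = ∏ j : Fin (k+1), (1 - (Ematrix (k+2) x ⟨(j : ℕ), by omega⟩
        ⟨(j : ℕ) + 1, by omega⟩)^2) from rfl]
    rw [Fin.prod_univ_castSucc]
    have hterm : ∀ j : Fin k, (Ematrix (k+1) (x ∘ Fin.castSucc) ⟨(j : ℕ), by omega⟩
        ⟨(j : ℕ) + 1, by omega⟩) = Ematrix (k+2) x ⟨(j : ℕ), by omega⟩ ⟨(j : ℕ) + 1, by omega⟩ := by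
      intro j
      simp [Ematrix, Fin.castSucc, Fin.castAdd, Fin.castLE]
    have hlastterm : (1 - c^2) = 1 - (Ematrix (k+2) x ⟨((Fin.last k : Fin (k+1)) : ℕ), by omega⟩
        ⟨((Fin.last k : Fin (k+1)) : ℕ) + 1, by omega⟩)^2 := by
      have h : Ematrix (k+2) x ⟨k, by omega⟩ ⟨k + 1, by omega⟩ = c := hEpl
      simp only [Fin.val_last]
      rw [h]
    rw [mul_comm]
    congr 1

theorem det_PEP (n : ℕ) (x : Fin n → ℝ) (hx : StrictMono x)
    (m : Fin n → ℝ) (hm : ∀ j, 0 < m j) :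
    (Matrix.det (Matrix.diagonal m * Ematrix n x * Matrix.diagonal m) =
      (∏ j : Fin (n - 1),
        (1 - (Ematrix n x ⟨(j : ℕ), by omega⟩ ⟨(j : ℕ) + 1, by omega⟩) ^ 2)) *
      ∏ j : Fin n, (m j) ^ 2) ∧
    0 < Matrix.det (Matrix.diagonal m * Ematrix n x * Matrix.diagonal m) := by
  have hdet : Matrix.det (Matrix.diagonal m * Ematrix n x * Matrix.diagonal m) =
      (∏ j : Fin (n - 1),
        (1 - (Ematrix n x ⟨(j : ℕ), by omega⟩ ⟨(j : ℕ) + 1, by omega⟩) ^ 2)) *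
      ∏ j : Fin n, (m j) ^ 2 := by
    rw [Matrix.det_mul, Matrix.det_mul, Matrix.det_diagonal, detE n x hx]
    rw [Finset.prod_pow]
    ring
  refine ⟨hdet, ?_⟩
  rw [hdet]
  apply mul_pos
  · apply Finset.prod_pos
    intro j _
    have hlt : x ⟨(j : ℕ), by omega⟩ < x ⟨(j : ℕ) + 1, by omega⟩ := hx (by simp [Fin.lt_def])
    have h1 : Ematrix n x ⟨(j : ℕ), by omega⟩ ⟨(j : ℕ) + 1, by omega⟩ < 1 := by
      simp only [Ematrix]
      rw [Real.exp_lt_one_iff]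
      rw [abs_of_nonpos (by linarith)]
      linarith
    have h2 : 0 < Ematrix n x ⟨(j : ℕ), by omega⟩ ⟨(j : ℕ) + 1, by omega⟩ := Real.exp_pos _
    nlinarith
  · exact Finset.prod_pos fun j _ => pow_pos (hm j) 2
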